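/- Let k ∈ ℕ and let s : ℕ^k → ℕ∞ (where ℕ∞ = ℕ ∪ {∞}). Then there exists a finite set S ⊆ ℕ^k such that s n < ∞ for all n ∈ S, and for every x ∈ [0,∞]^k one has inf_{n ∈ ℕ^k} (n·x + s n) = min_{n ∈ S} (n·x + s n), where n·x = Σᵢ nᵢ xᵢ. -/

import Mathlib

open scoped ENNReal

theorem stmt_0 (k : ℕ) (s : (Fin k → ℕ) → ℕ∞) :
    ∃ S : Finset (Fin k → ℕ),
      (∀ n ∈ S, s n < ⊤) ∧
      ∀ x : Fin k → ℝ≥0∞,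
        (⨅ n : Fin k → ℕ, (∑ i, (n i : ℝ≥0∞) * x i) + (s n : ℝ≥0∞)) =
          S.inf (fun n => (∑ i, (n i : ℝ≥0∞) * x i) + (s n : ℝ≥0∞)) := by
  classical
  -- the graph of `s` restricted to finite values
  set T : Set ((Fin k → ℕ) × ℕ) := {p | s p.1 = (p.2 : ℕ∞)} with hT
  have hpwoT : T.IsPWO := by
    haveI : IsWellOrder ℕ (· < ·) := ⟨⟩
    have h1 : (Set.univ : Set (Fin k → ℕ)).IsPWO := Set.isPWO_of_wellQuasiOrderedLE (Set.univ : Set (Fin k → ℕ))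
    have h2 : (Set.univ : Set ℕ).IsPWO := Set.isPWO_of_wellQuasiOrderedLE Set.univ
    exact (h1.prod h2).mono (by simp)
  -- minimal elements of T
  set M : Set ((Fin k → ℕ) × ℕ) := {p ∈ T | ∀ q ∈ T, ¬ q < p} with hM
  have hMT : M ⊆ T := fun p hp => hp.1
  have hanti : IsAntichain (· ≤ ·) M := by
    intro p hp q hq hne hle
    exact hq.2 p hp.1 (lt_of_le_of_ne hle hne)
  have hMfin : M.Finite :=
    hanti.finite_of_partiallyWellOrderedOn ((hpwoT.mono hMT))
  -- every element of T dominates a minimal element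
  have hdom : ∀ p ∈ T, ∃ q ∈ M, q ≤ p := by
    intro p hp
    have hwf : WellFounded ((· < ·) : ((Fin k → ℕ) × ℕ) → _ → Prop) := wellFounded_lt
    obtain ⟨q, hq, hqmin⟩ := hwf.has_min {r ∈ T | r ≤ p} ⟨p, hp, le_rfl⟩
    refine ⟨q, ⟨hq.1, fun r hr hlt => hqmin r ⟨hr, hlt.le.trans hq.2⟩ hlt⟩, hq.2⟩
  -- the finite set
  have hSfin : (Prod.fst '' M).Finite := hMfin.image _
  refine ⟨hSfin.toFinset, ?_, ?_⟩
  · intro n hn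
    simp only [Set.Finite.mem_toFinset, Set.mem_image] at hn
    obtain ⟨p, hpM, rfl⟩ := hn
    have := hpM.1
    simp only [hT, Set.mem_setOf_eq] at this
    rw [this]
    exact WithTop.coe_lt_top _
  · intro x
    refine le_antisymm (Finset.le_inf fun m hm => iInf_le _ m) (le_iInf fun n => ?_)
    rcases eq_or_lt_of_le (le_top : s n ≤ ⊤) with htop | hlt
    · rw [htop]
      simp
    · -- s n is finite; find a minimal element below (n, (s n).toNat)
      have hc : ((s n).toNat : ℕ∞) = s n := ENat.coe_toNat hlt.ne
      set c := (s n).toNat with hcdef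
      have hpT : (n, c) ∈ T := by simp [hT, hc.symm]
      obtain ⟨q, hqM, hqle⟩ := hdom _ hpT
      have hq1 : q.1 ∈ hSfin.toFinset := by
        simp only [Set.Finite.mem_toFinset]
        exact ⟨q, hqM, rfl⟩
      refine le_trans (Finset.inf_le hq1) ?_
      have hsq : s q.1 = (q.2 : ℕ∞) := hqM.1
      gcongr with i
      · exact_mod_cast hqle.1 i
      · rw [hsq, ← hc]
        exact_mod_cast (hqle.2 : q.2 ≤ c)
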